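/- Let N be an embedded polygon with n unit sides z_0,…,z_{n-1} (edges [z_j,z_{j+1}], indices mod n) and weights a_{[z_j,z_{j+1}]} ∈ ℝ\{0}. Then the map Λ = (D F_{(Id,a)}, D L_{Id}) has rank 3n - 2 if and only if A := ∑_j (Re(z_{j+1}-z_j)/a_{[z_j,z_{j+1}]})(z_{j+1}-z_j) and B := ∑_j (Im(z_{j+1}-z_j)/a_{[z_j,z_{j+1}]})(z_{j+1}-z_j) are ℝ-linearly independent in ℂ. -/

import Mathlib

lemma sum_range_zmod {M : Type*} [AddCommMonoid M] (n : ℕ) [NeZero n] (g : ZMod n → M) :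
    ∑ k ∈ Finset.range n, g (k : ZMod n) = ∑ j : ZMod n, g j := by
  refine Finset.sum_nbij' (fun k => (k : ZMod n)) (fun j => j.val) ?_ ?_ ?_ ?_ ?_
  · intro a _; exact Finset.mem_univ _
  · intro j _; exact Finset.mem_range.mpr (ZMod.val_lt j)
  · intro k hk; exact ZMod.val_cast_of_lt (Finset.mem_range.mp hk)
  · intro j _; exact ZMod.natCast_zmod_val j
  · intro a _; rfl

lemma const_of_step {X : Type*} {n : ℕ} [NeZero n] (f : ZMod n → X)
    (h : ∀ j, f (j + 1) = f j) : ∀ j, f j = f 0 := by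
  have key : ∀ k : ℕ, f (k : ZMod n) = f 0 := by
    intro k; induction k with
    | zero => simp
    | succ m ih => rw [Nat.cast_succ, h, ih]
  intro j
  rw [← ZMod.natCast_zmod_val j]; exact key _

lemma exists_psi {n : ℕ} [NeZero n] (hn : 1 < n) (g : ZMod n → ℂ)
    (hg : ∑ j, g j = 0) : ∃ Ψ : ZMod n → ℂ, ∀ j, Ψ (j + 1) - Ψ j = g j := by
  refine ⟨fun j => ∑ k ∈ Finset.range j.val, g (k : ZMod n), fun j => ?_⟩
  haveI : Fact (1 < n) := ⟨hn⟩
  dsimp only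
  have hjv := ZMod.val_lt j
  by_cases h : j.val + 1 < n
  · have h1 : (j + 1).val = j.val + 1 := by
      rw [ZMod.val_add, ZMod.val_one n, Nat.mod_eq_of_lt h]
    rw [h1, Finset.sum_range_succ, ZMod.natCast_zmod_val j]
    ring
  · have hjn : j.val + 1 = n := by omega
    have h0 : j + 1 = 0 := by
      have : ((j.val + 1 : ℕ) : ZMod n) = 0 := by rw [hjn]; exact ZMod.natCast_self n
      rwa [Nat.cast_add, Nat.cast_one, ZMod.natCast_zmod_val j] at this
    have htot : ∑ k ∈ Finset.range n, g (k : ZMod n) = 0 := by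
      rw [sum_range_zmod]; exact hg
    have htot' : ∑ k ∈ Finset.range j.val, g (k : ZMod n) + g j = 0 := by
      have : ∑ k ∈ Finset.range (j.val + 1), g (k : ZMod n) = 0 := by rw [hjn]; exact htot
      rwa [Finset.sum_range_succ, ZMod.natCast_zmod_val j] at this
    rw [h0]
    simp only [ZMod.val_zero, Finset.range_zero, Finset.sum_empty]
    linear_combination -htot'

/-- Differential of the force contribution of a single unit edge with direction
`d` (`|d| = 1`), weight `w`, weight perturbation `wdot`, and relative vertex
perturbation `dPhi`. -/
noncomputable def dForce (w wdot : ℝ) (d dPhi : ℂ) : ℂ :=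
  (wdot : ℂ) * d +
    (w : ℂ) * (dPhi - d * ((((starRingEnd ℂ d) * dPhi).re : ℝ) : ℂ))

lemma dForce_perp (w wdot : ℝ) (d δ : ℂ) (h : ((starRingEnd ℂ d) * δ).re = 0) :
    dForce w wdot d δ = (wdot : ℂ) * d + (w : ℂ) * δ := by
  rw [dForce, h]; simp

lemma dForce_neg (w wdot : ℝ) (d δ : ℂ) :
    dForce w wdot (-d) (-δ) = -dForce w wdot d δ := by
  simp only [dForce, map_neg, neg_mul_neg]
  ring

/-- For an embedded polygon with `n` unit sides `z 0, …, z (n-1)` (edges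
`[z j, z (j+1)]`, indices mod `n`) with nowhere-vanishing weights `a`, the map
`Λ = (D F_{(Id,a)}, D L_{Id})` has rank `3n - 2` (i.e. its kernel is reduced to
the translations) if and only if
`A = ∑_j (Re(z_{j+1}-z_j)/a_j)(z_{j+1}-z_j)` and
`B = ∑_j (Im(z_{j+1}-z_j)/a_j)(z_{j+1}-z_j)` are `ℝ`-linearly independent. -/
theorem polygon_flexible_iff
    (n : ℕ) (hn : 3 ≤ n) [NeZero n]
    (z : ZMod n → ℂ) (hzinj : Function.Injective z)
    (hunit : ∀ j : ZMod n, ‖z (j + 1) - z j‖ = 1)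
    (a : ZMod n → ℝ) (ha : ∀ j, a j ≠ 0) :
    (∀ (Ψ : ZMod n → ℂ) (adot : ZMod n → ℝ),
      (∀ j : ZMod n,
        dForce (a j) (adot j) (z (j + 1) - z j) (Ψ (j + 1) - Ψ j)
          + dForce (a (j - 1)) (adot (j - 1)) (z (j - 1) - z j)
              (Ψ (j - 1) - Ψ j) = 0) →
      (∀ j : ZMod n,
        ((starRingEnd ℂ (z j - z (j + 1))) * (Ψ j - Ψ (j + 1))).re = 0) →
      ((∃ e : ℂ, ∀ j, Ψ j = e) ∧ ∀ j, adot j = 0))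
    ↔ LinearIndependent ℝ
        ![∑ j : ZMod n, ((((z (j + 1) - z j).re / a j : ℝ)) : ℂ) * (z (j + 1) - z j),
          ∑ j : ZMod n, ((((z (j + 1) - z j).im / a j : ℝ)) : ℂ) * (z (j + 1) - z j)] := by
  have hn1 : (1 : ℕ) < n := by omega
  obtain ⟨d, hddef⟩ : ∃ d : ZMod n → ℂ, ∀ j, d j = z (j + 1) - z j :=
    ⟨_, fun _ => rfl⟩
  have haC : ∀ j, (a j : ℂ) ≠ 0 := fun j => Complex.ofReal_ne_zero.mpr (ha j)
  have hns : ∀ j, (d j).re * (d j).re + (d j).im * (d j).im = 1 := by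
    intro j
    have h1 : Complex.normSq (d j) = 1 := by
      rw [← Complex.sq_norm, hddef j, hunit j]; norm_num
    rw [Complex.normSq_apply] at h1; exact h1
  have hcd : ∀ j, (starRingEnd ℂ) (d j) * d j = 1 := by
    intro j
    rw [mul_comm, Complex.mul_conj]
    have h1 : Complex.normSq (d j) = 1 := by
      rw [Complex.normSq_apply]; exact hns j
    rw [h1, Complex.ofReal_one]
  have hdm : ∀ j : ZMod n, z (j - 1) - z j = -(d (j - 1)) := by
    intro j
    have h2 : (j - 1) + 1 = j := by ring
    rw [hddef (j - 1), h2]; ring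
  have hzz : ∀ j : ZMod n, z j - z (j + 1) = -(d j) := by
    intro j; rw [hddef j]; ring
  constructor
  · -- kernel trivial → linearly independent
    intro hker
    rw [LinearIndependent.pair_iff]
    intro s t hst
    by_contra hst0
    set c : ℂ := Complex.I * s - t with hc
    have hcne : c ≠ 0 := by
      intro h
      apply hst0
      rw [hc, Complex.ext_iff] at h
      simp at h
      exact ⟨h.2, h.1⟩
    obtain ⟨r, hr⟩ : ∃ r : ZMod n → ℝ,
        ∀ j, r j = (s * (d j).re + t * (d j).im) / a j := ⟨_, fun _ => rfl⟩
    obtain ⟨g, hgdef⟩ : ∃ g : ZMod n → ℂ,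
        ∀ j, g j = Complex.I * (r j : ℂ) * d j := ⟨_, fun _ => rfl⟩
    obtain ⟨adot, hadot⟩ : ∃ adot : ZMod n → ℝ,
        ∀ j, adot j = -t * (d j).re + s * (d j).im := ⟨_, fun _ => rfl⟩
    have har : ∀ j, a j * r j = s * (d j).re + t * (d j).im := by
      intro j
      rw [hr j, mul_comm, div_mul_cancel₀ _ (ha j)]
    have hst' : ∑ j : ZMod n,
        ((s : ℂ) * ((((z (j + 1) - z j).re / a j : ℝ)) : ℂ) * (z (j + 1) - z j)
          + (t : ℂ) * ((((z (j + 1) - z j).im / a j : ℝ)) : ℂ) * (z (j + 1) - z j)) = 0 := by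
      calc ∑ j : ZMod n,
            ((s : ℂ) * ((((z (j + 1) - z j).re / a j : ℝ)) : ℂ) * (z (j + 1) - z j)
              + (t : ℂ) * ((((z (j + 1) - z j).im / a j : ℝ)) : ℂ) * (z (j + 1) - z j))
          = s • (∑ j : ZMod n, ((((z (j + 1) - z j).re / a j : ℝ)) : ℂ) * (z (j + 1) - z j))
            + t • (∑ j : ZMod n, ((((z (j + 1) - z j).im / a j : ℝ)) : ℂ) * (z (j + 1) - z j)) := by
            rw [Complex.real_smul, Complex.real_smul, Finset.mul_sum, Finset.mul_sum,
              ← Finset.sum_add_distrib]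
            exact Finset.sum_congr rfl fun j _ => by ring
        _ = 0 := hst
    have hsum : ∑ j, g j = 0 := by
      have h2 : ∑ j, g j = Complex.I * ∑ j : ZMod n,
          ((s : ℂ) * ((((z (j + 1) - z j).re / a j : ℝ)) : ℂ) * (z (j + 1) - z j)
            + (t : ℂ) * ((((z (j + 1) - z j).im / a j : ℝ)) : ℂ) * (z (j + 1) - z j)) := by
        rw [Finset.mul_sum]
        refine Finset.sum_congr rfl fun j _ => ?_
        rw [hgdef j, hr j, hddef j]
        push_cast
        ring
      rw [h2, hst', mul_zero]
    obtain ⟨Ψ, hΨ⟩ := exists_psi hn1 g hsum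
    have key : ∀ j, (adot j : ℂ) * d j + (a j : ℂ) * g j = c := by
      intro j
      rw [hgdef j, hc, Complex.ext_iff]
      constructor
      · simp only [Complex.add_re, Complex.sub_re, Complex.mul_re, Complex.mul_im,
          Complex.I_re, Complex.I_im, Complex.ofReal_re, Complex.ofReal_im]
        ring_nf
        linear_combination (d j).re * hadot j - (d j).im * har j - t * hns j
      · simp only [Complex.add_im, Complex.sub_im, Complex.mul_re, Complex.mul_im,
          Complex.I_re, Complex.I_im, Complex.ofReal_re, Complex.ofReal_im]
        ring_nf
        linear_combination (d j).im * hadot j + (d j).re * har j + s * hns j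
    have hperp : ∀ j, ((starRingEnd ℂ (d j)) * g j).re = 0 := by
      intro j
      have h2 : (starRingEnd ℂ (d j)) * g j = Complex.I * (r j : ℂ) := by
        rw [hgdef j]
        calc (starRingEnd ℂ (d j)) * (Complex.I * (r j : ℂ) * d j)
            = Complex.I * (r j : ℂ) * ((starRingEnd ℂ (d j)) * d j) := by ring
          _ = Complex.I * (r j : ℂ) := by rw [hcd j, mul_one]
      rw [h2]; simp
    have hforce : ∀ j : ZMod n,
        dForce (a j) (adot j) (z (j + 1) - z j) (Ψ (j + 1) - Ψ j)
          + dForce (a (j - 1)) (adot (j - 1)) (z (j - 1) - z j)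
              (Ψ (j - 1) - Ψ j) = 0 := by
      intro j
      have hgm : Ψ (j - 1) - Ψ j = -(g (j - 1)) := by
        have h1 := hΨ (j - 1)
        rw [show (j - 1) + 1 = j from by ring] at h1
        linear_combination -h1
      rw [(hddef j).symm, hΨ j, hdm j, hgm, dForce_neg,
        dForce_perp _ _ _ _ (hperp j), dForce_perp _ _ _ _ (hperp (j - 1))]
      linear_combination key j - key (j - 1)
    have hlen : ∀ j : ZMod n,
        ((starRingEnd ℂ (z j - z (j + 1))) * (Ψ j - Ψ (j + 1))).re = 0 := by
      intro j
      have h1 : Ψ j - Ψ (j + 1) = -(g j) := by linear_combination -(hΨ j)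
      rw [hzz j, h1, map_neg, neg_mul_neg]
      exact hperp j
    obtain ⟨⟨e, he⟩, hadot0⟩ := hker Ψ adot hforce hlen
    have hg0 : g 0 = 0 := by rw [← hΨ 0, he, he, sub_self]
    have hczero : c = 0 := by
      rw [← key 0, hadot0 0, hg0]
      simp
    exact hcne hczero
  · -- linearly independent → kernel trivial
    intro hli Ψ adot hforce hlen
    rw [LinearIndependent.pair_iff] at hli
    have hperp : ∀ j, ((starRingEnd ℂ (d j)) * (Ψ (j + 1) - Ψ j)).re = 0 := by
      intro j
      have h0 := hlen j
      rw [hzz j, show Ψ j - Ψ (j + 1) = -(Ψ (j + 1) - Ψ j) from by ring,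
        map_neg, neg_mul_neg] at h0
      exact h0
    obtain ⟨c, hcdef⟩ : ∃ c : ZMod n → ℂ,
        ∀ j, c j = (adot j : ℂ) * d j + (a j : ℂ) * (Ψ (j + 1) - Ψ j) :=
      ⟨_, fun _ => rfl⟩
    have hstep : ∀ j, c j = c (j - 1) := by
      intro j
      have hf := hforce j
      have h3 : Ψ (j - 1) - Ψ j = -(Ψ ((j - 1) + 1) - Ψ (j - 1)) := by
        rw [show (j - 1) + 1 = j from by ring]; ring
      rw [(hddef j).symm, hdm j, h3, dForce_neg,
        dForce_perp _ _ _ _ (hperp j), dForce_perp _ _ _ _ (hperp (j - 1))] at hf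
      rw [hcdef j, hcdef (j - 1)]
      linear_combination hf
    have hconst : ∀ j, c j = c 0 :=
      const_of_step c fun j => by
        have := hstep (j + 1); rwa [add_sub_cancel_right] at this
    obtain ⟨u, hudef⟩ : ∃ u : ZMod n → ℂ,
        ∀ j, u j = (starRingEnd ℂ (d j)) * (Ψ (j + 1) - Ψ j) := ⟨_, fun _ => rfl⟩
    have hmul : ∀ j, (adot j : ℂ) + (a j : ℂ) * u j = (starRingEnd ℂ (d j)) * c 0 := by
      intro j
      have e1 : (starRingEnd ℂ (d j)) * c j
          = (adot j : ℂ) * ((starRingEnd ℂ (d j)) * d j)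
            + (a j : ℂ) * ((starRingEnd ℂ (d j)) * (Ψ (j + 1) - Ψ j)) := by
        rw [hcdef j]; ring
      rw [hcd j, mul_one] at e1
      rw [hudef j, ← e1, hconst j]
    have hure : ∀ j, (u j).re = 0 := by
      intro j; rw [hudef j]; exact hperp j
    have huim : ∀ j, a j * (u j).im = ((starRingEnd ℂ (d j)) * c 0).im := by
      intro j
      have h2 := congrArg Complex.im (hmul j)
      simp only [Complex.add_im, Complex.ofReal_im, Complex.mul_im,
        Complex.ofReal_re, zero_add, zero_mul, add_zero] at h2
      exact h2
    have hdu : ∀ j, Ψ (j + 1) - Ψ j = d j * u j := by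
      intro j
      rw [hudef j, ← mul_assoc, mul_comm (d j), hcd j, one_mul]
    have hsum0 : ∑ j : ZMod n, (Ψ (j + 1) - Ψ j) = 0 := by
      rw [Finset.sum_sub_distrib]
      have h2 : ∑ j : ZMod n, Ψ (j + 1) = ∑ j : ZMod n, Ψ j :=
        Fintype.sum_equiv (Equiv.addRight 1) _ _ fun j => rfl
      rw [h2, sub_self]
    have huI : ∀ j, u j = (((u j).im : ℝ) : ℂ) * Complex.I := by
      intro j
      have h2 := Complex.re_add_im (u j)
      rw [hure j] at h2
      simpa using h2.symm
    have hS : ∑ j : ZMod n, (((u j).im : ℝ) : ℂ) * d j = 0 := by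
      have h1 : ∑ j : ZMod n, (Ψ (j + 1) - Ψ j)
          = Complex.I * ∑ j : ZMod n, (((u j).im : ℝ) : ℂ) * d j := by
        rw [Finset.mul_sum]
        refine Finset.sum_congr rfl fun j _ => ?_
        conv_lhs => rw [hdu j, huI j]
        ring
      rw [hsum0] at h1
      rcases mul_eq_zero.mp h1.symm with h | h
      · exact absurd h Complex.I_ne_zero
      · exact h
    set p : ℝ := (c 0).re with hp
    set q : ℝ := (c 0).im with hq
    have himval : ∀ j, ((starRingEnd ℂ (d j)) * c 0).im
        = q * (d j).re - p * (d j).im := by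
      intro j
      rw [Complex.mul_im, Complex.conj_re, Complex.conj_im, ← hp, ← hq]
      ring
    have h1 : ∀ j, (u j).im = (q * (d j).re - p * (d j).im) / a j := by
      intro j
      rw [eq_div_iff (ha j)]
      linear_combination huim j + himval j
    have hcomb : q • (∑ j : ZMod n, ((((z (j + 1) - z j).re / a j : ℝ)) : ℂ) * (z (j + 1) - z j))
        + (-p) • (∑ j : ZMod n, ((((z (j + 1) - z j).im / a j : ℝ)) : ℂ) * (z (j + 1) - z j)) = 0 := by
      rw [Complex.real_smul, Complex.real_smul, Finset.mul_sum, Finset.mul_sum,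
        ← Finset.sum_add_distrib, ← hS]
      refine Finset.sum_congr rfl fun j _ => ?_
      rw [h1 j, ← hddef j]
      push_cast
      ring
    obtain ⟨hq0, hp0⟩ := hli q (-p) hcomb
    have hpz : p = 0 := by linarith
    have hc0 : c 0 = 0 := by
      apply Complex.ext
      · rw [← hp, hpz, Complex.zero_re]
      · rw [← hq, hq0, Complex.zero_im]
    have hfin : ∀ j, (adot j : ℂ) + (a j : ℂ) * u j = 0 := by
      intro j; rw [hmul j, hc0, mul_zero]
    have hadot0 : ∀ j, adot j = 0 := by
      intro j
      have h2 := congrArg Complex.re (hfin j)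
      simp only [Complex.add_re, Complex.ofReal_re, Complex.mul_re,
        Complex.ofReal_im, hure j, mul_zero, zero_mul, sub_zero, add_zero,
        Complex.zero_re] at h2
      exact h2
    have huim0 : ∀ j, (u j).im = 0 := by
      intro j
      have h2 := congrArg Complex.im (hfin j)
      simp only [Complex.add_im, Complex.ofReal_im, Complex.mul_im,
        Complex.ofReal_re, zero_add, zero_mul, add_zero, Complex.zero_im] at h2
      rcases mul_eq_zero.mp h2 with h | h
      · exact absurd h (ha j)
      · exact h
    have hu0 : ∀ j, u j = 0 := fun j => Complex.ext (hure j) (huim0 j)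
    have hΨstep : ∀ j : ZMod n, Ψ (j + 1) = Ψ j := by
      intro j
      have h2 := hdu j
      rw [hu0 j, mul_zero, sub_eq_zero] at h2
      exact h2
    exact ⟨⟨Ψ 0, const_of_step Ψ hΨstep⟩, hadot0⟩
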